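/- With λ = I + ε·k, ε² = 0, ∂_c ε = 0: the symmetrized object Ω^a_{bc} := C^a_{bc} + C^a_{cb} − 2C̊^a_{bc} equals ε·(∂_c(k^a_b) + ∂_b(k^a_c) − (∂_c w_{ab} + ∂_b w_{ac} − ∂_a w_{bc})), where w = k + kᵀ and 2 is invertible. -/

import Mathlib

open Matrix

/-- Vertical canonical connection coefficients of the linearized EAP space. -/
noncomputable def vC {n : ℕ} {A : Type*} [CommRing A]
    (D : Fin n → Derivation ℤ A A) (ε : A) (k : Matrix (Fin n) (Fin n) A)
    (a b c : Fin n) : A :=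
  ∑ i, ((1 + ε • k)⁻¹ : Matrix (Fin n) (Fin n) A) a i * D c ((1 + ε • k) i b)

/-- Christoffel-type coefficients of a metric g. -/
noncomputable def chr {n : ℕ} {A : Type*} [CommRing A] [Invertible (2 : A)]
    (D : Fin n → Derivation ℤ A A) (g : Matrix (Fin n) (Fin n) A)
    (a b c : Fin n) : A :=
  ⅟(2 : A) * ∑ d, (g⁻¹ : Matrix (Fin n) (Fin n) A) a d *
    (D b (g c d) + D c (g b d) - D d (g b c))

section Aux
variable {n : ℕ} {A : Type*} [CommRing A]

lemma aux_sq_smul_zero (ε : A) (hε : ε ^ 2 = 0) (M : Matrix (Fin n) (Fin n) A) :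
    (ε • M) * (ε • M) = 0 := by
  rw [Matrix.smul_mul, Matrix.mul_smul, smul_smul, ← sq, hε, zero_smul]

lemma aux_inv_one_add (ε : A) (hε : ε ^ 2 = 0) (M : Matrix (Fin n) (Fin n) A) :
    (1 + ε • M)⁻¹ = 1 - ε • M := by
  apply Matrix.inv_eq_right_inv
  have := aux_sq_smul_zero ε hε M
  rw [Matrix.mul_sub, Matrix.add_mul, Matrix.add_mul]
  simp [this]

lemma aux_gexp (ε : A) (hε : ε ^ 2 = 0) (k : Matrix (Fin n) (Fin n) A) :
    (1 + ε • k)ᵀ * (1 + ε • k) = 1 + ε • (kᵀ + k) := by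
  have h : (ε • kᵀ) * (ε • k) = 0 := by
    rw [Matrix.smul_mul, Matrix.mul_smul, smul_smul, ← sq, hε, zero_smul]
  rw [transpose_add, transpose_one, transpose_smul]
  rw [Matrix.add_mul, Matrix.mul_add, Matrix.mul_add, h]
  simp [smul_add]
  abel

lemma aux_sum_delta_sub (ε : A) (hε : ε ^ 2 = 0) (M : Matrix (Fin n) (Fin n) A)
    (a : Fin n) (f : Fin n → A) :
    ∑ i, ((1 : Matrix (Fin n) (Fin n) A) - ε • M) a i * (ε * f i) = ε * f a := by
  have : ∀ i, ((1 : Matrix (Fin n) (Fin n) A) - ε • M) a i * (ε * f i)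
      = (1 : Matrix (Fin n) (Fin n) A) a i * (ε * f i) - ε ^ 2 * (M a i * f i) := by
    intro i
    simp [Matrix.sub_apply, Matrix.smul_apply, sub_mul, sq]
    ring
  simp only [this, hε, zero_mul, sub_zero, Matrix.one_apply, ite_mul, one_mul, zero_mul]
  simp

lemma aux_vC_eq (D : Fin n → Derivation ℤ A A) (ε : A) (hε : ε ^ 2 = 0)
    (hDε : ∀ c, D c ε = 0) (k : Matrix (Fin n) (Fin n) A) (a b c : Fin n) :
    vC D ε k a b c = ε * D c (k a b) := by
  unfold vC
  rw [aux_inv_one_add ε hε]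
  have hD : ∀ i, D c ((1 + ε • k) i b) = ε * D c (k i b) := by
    intro i
    rw [Matrix.add_apply, Matrix.smul_apply, map_add, smul_eq_mul, Derivation.leibniz]
    rw [Matrix.one_apply]
    split <;> simp [hDε, smul_eq_mul, mul_comm]
  simp only [hD]
  exact aux_sum_delta_sub ε hε k a _

end Aux

section Aux2
variable {n : ℕ} {A : Type*} [CommRing A] [Invertible (2 : A)]

lemma aux_chr_eq (D : Fin n → Derivation ℤ A A) (ε : A) (hε : ε ^ 2 = 0)
    (hDε : ∀ c, D c ε = 0) (k : Matrix (Fin n) (Fin n) A) (a b c : Fin n) :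
    chr D ((1 + ε • k)ᵀ * (1 + ε • k)) a b c
      = ⅟(2 : A) * (ε * (D b ((kᵀ + k) c a) + D c ((kᵀ + k) b a)
          - D a ((kᵀ + k) b c))) := by
  set w := kᵀ + k with hw
  unfold chr
  rw [aux_gexp ε hε, aux_inv_one_add ε hε]
  have hD : ∀ (x y z : Fin n), D x ((1 + ε • w) y z) = ε * D x (w y z) := by
    intro x y z
    rw [Matrix.add_apply, Matrix.smul_apply, map_add, smul_eq_mul,
      Derivation.leibniz, Matrix.one_apply]
    split <;> simp [hDε, smul_eq_mul, mul_comm]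
  have : ∀ d, D b ((1 + ε • w) c d) + D c ((1 + ε • w) b d) - D d ((1 + ε • w) b c)
      = ε * (D b (w c d) + D c (w b d) - D d (w b c)) := by
    intro d; rw [hD, hD, hD]; ring
  simp only [← hw, this]
  rw [aux_sum_delta_sub ε hε w a (fun d => D b (w c d) + D c (w b d) - D d (w b c))]

end Aux2

/-- Linearization of Ω^a_{bc} = C^a_{bc} + C^a_{cb} − 2C̊^a_{bc}
(Theorem 4.1(j)). -/
theorem stmt_9 {n : ℕ} {A : Type*} [CommRing A] [Invertible (2 : A)]
    (D : Fin n → Derivation ℤ A A)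
    (hcomm : ∀ b c x, D b (D c x) = D c (D b x))
    (ε : A) (hε : ε ^ 2 = 0) (hDε : ∀ c, D c ε = 0)
    (k : Matrix (Fin n) (Fin n) A) (a b c : Fin n) :
    vC D ε k a b c + vC D ε k a c b
        - 2 * chr D ((1 + ε • k)ᵀ * (1 + ε • k)) a b c
      = ε * (D c (k a b) + D b (k a c) -
          (D c ((k + kᵀ) a b) + D b ((k + kᵀ) a c) - D a ((k + kᵀ) b c))) := by
  rw [aux_vC_eq D ε hε hDε, aux_vC_eq D ε hε hDε, aux_chr_eq D ε hε hDε,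
    ← mul_assoc, mul_invOf_self, one_mul]
  simp only [Matrix.add_apply, Matrix.transpose_apply, map_add]
  ring
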